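/- For f integrable on [a,b] and 0 < α < 1, the right-sided Riemann-Liouville fractional derivative inverts the right-sided fractional integral: D^α_{b-}(I^α_{b-} f)(x) = f(x) for almost all x in [a,b]. -/

import Mathlib

open MeasureTheory Set

section Helpers

open Real intervalIntegral Filter Topology Metric
open scoped ENNReal NNReal

lemma rbeta {α : ℝ} (hα0 : 0 < α) (hα1 : α < 1) :
    ∫ u in (0:ℝ)..1, u ^ (-α) * (1 - u) ^ (α - 1) = Real.Gamma (1 - α) * Real.Gamma α := by
  have hs : (0:ℝ) < 1 - α := by linarith
  have h := Complex.Gamma_mul_Gamma_eq_betaIntegral (s := (1 - α : ℝ)) (t := (α : ℝ))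
    (by simpa using hs) (by simpa using hα0)
  have hadd : ((1 - α : ℝ) : ℂ) + (α : ℝ) = 1 := by push_cast; ring
  rw [hadd, Complex.Gamma_one, one_mul, Complex.Gamma_ofReal, Complex.Gamma_ofReal] at h
  have hint : Complex.betaIntegral ((1 - α : ℝ)) ((α : ℝ))
      = ((∫ u in (0:ℝ)..1, u ^ (-α) * (1 - u) ^ (α - 1) : ℝ) : ℂ) := by
    rw [Complex.betaIntegral, ← intervalIntegral.integral_ofReal]
    refine intervalIntegral.integral_congr fun x hx => ?_
    rw [uIcc_of_le (by norm_num)] at hx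
    obtain ⟨h0, h1⟩ := hx
    have e1 : ((1 - α : ℝ) : ℂ) - 1 = ((-α : ℝ) : ℂ) := by push_cast; ring
    have e2 : ((α : ℝ) : ℂ) - 1 = ((α - 1 : ℝ) : ℂ) := by push_cast; ring
    have e3 : 1 - (x : ℂ) = ((1 - x : ℝ) : ℂ) := by push_cast; ring
    rw [e1, e2, e3, ← Complex.ofReal_cpow h0, ← Complex.ofReal_cpow (by linarith),
      ← Complex.ofReal_mul]
  rw [hint, ← Complex.ofReal_mul] at h
  exact_mod_cast h.symm

lemma beta_shift {α z t : ℝ} (hα0 : 0 < α) (hα1 : α < 1) (hzt : z < t) :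
    ∫ y in z..t, (y - z) ^ (-α) * (t - y) ^ (α - 1)
      = Real.Gamma (1 - α) * Real.Gamma α := by
  have hc : (0:ℝ) < t - z := by linarith
  set c := t - z with hcdef
  have key : (∫ u in (0:ℝ)..1, (fun y => (y - z) ^ (-α) * (t - y) ^ (α - 1)) (c * u + z))
      = c⁻¹ • ∫ y in c * 0 + z..c * 1 + z, (y - z) ^ (-α) * (t - y) ^ (α - 1) :=
    intervalIntegral.integral_comp_mul_add (a := (0:ℝ)) (b := 1)
      (fun y => (y - z) ^ (-α) * (t - y) ^ (α - 1)) hc.ne' z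
  have hb : c * 0 + z = z := by ring
  have hb' : c * 1 + z = t := by rw [hcdef]; ring
  rw [hb, hb'] at key
  have lhs_eq : (∫ u in (0:ℝ)..1, (fun y => (y - z) ^ (-α) * (t - y) ^ (α - 1)) (c * u + z))
      = c⁻¹ * (Real.Gamma (1 - α) * Real.Gamma α) := by
    have : ∀ u ∈ uIcc (0:ℝ) 1,
        (c * u + z - z) ^ (-α) * (t - (c * u + z)) ^ (α - 1)
          = c⁻¹ * (u ^ (-α) * (1 - u) ^ (α - 1)) := by
      intro u hu
      rw [uIcc_of_le (by norm_num)] at hu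
      obtain ⟨h0, h1⟩ := hu
      have e1 : c * u + z - z = c * u := by ring
      have e2 : t - (c * u + z) = c * (1 - u) := by rw [hcdef]; ring
      rw [e1, e2, Real.mul_rpow hc.le h0, Real.mul_rpow hc.le (by linarith)]
      have e3 : c ^ (-α) * u ^ (-α) * (c ^ (α - 1) * (1 - u) ^ (α - 1))
          = (c ^ (-α) * c ^ (α - 1)) * (u ^ (-α) * (1 - u) ^ (α - 1)) := by ring
      rw [e3, ← Real.rpow_add hc]
      rw [show -α + (α - 1) = -1 by ring, Real.rpow_neg_one]
    rw [intervalIntegral.integral_congr this, intervalIntegral.integral_const_mul,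
      rbeta hα0 hα1]
  rw [lhs_eq] at key
  have := key.symm
  field_simp at this ⊢
  rw [smul_eq_mul, ← mul_assoc, one_div, mul_inv_cancel₀ hc.ne', one_mul] at this
  linarith [this]

lemma kernel_intble {α z t : ℝ} (hα0 : 0 < α) (hα1 : α < 1) (hzt : z < t) :
    IntervalIntegrable (fun y => (y - z) ^ (-α) * (t - y) ^ (α - 1)) volume z t := by
  set m := (z + t) / 2 with hm
  have hzm : z < m := by rw [hm]; linarith
  have hmt : m < t := by rw [hm]; linarith
  have p1 : IntervalIntegrable (fun y => (y - z) ^ (-α) * (t - y) ^ (α - 1)) volume z m := by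
    have h1 : IntervalIntegrable (fun y => (y - z) ^ (-α)) volume z m := by
      have := (intervalIntegrable_rpow' (a := z - z) (b := m - z) (r := -α)
        (by linarith)).comp_sub_right z
      simpa using this
    refine h1.mul_continuousOn ?_
    refine ContinuousOn.rpow_const (by fun_prop) fun y hy => Or.inl ?_
    rw [uIcc_of_le hzm.le] at hy
    have : y ≤ m := hy.2
    have : 0 < t - y := by linarith
    positivity
  have p2 : IntervalIntegrable (fun y => (y - z) ^ (-α) * (t - y) ^ (α - 1)) volume m t := by
    have h1 : IntervalIntegrable (fun y => (t - y) ^ (α - 1)) volume m t := by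
      have := (intervalIntegrable_rpow' (a := t - m) (b := t - t) (r := α - 1)
        (by linarith)).comp_sub_left t
      simpa using this
    refine h1.continuousOn_mul ?_
    refine ContinuousOn.rpow_const (by fun_prop) fun y hy => Or.inl ?_
    rw [uIcc_of_le hmt.le] at hy
    have : m ≤ y := hy.1
    have : 0 < y - z := by linarith
    positivity
  exact p1.trans p2

lemma kernel_lintegral {α z t : ℝ} (hα0 : 0 < α) (hα1 : α < 1) (hzt : z < t) :
    ∫⁻ y in Ioc z t, ENNReal.ofReal ((y - z) ^ (-α) * (t - y) ^ (α - 1))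
      = ENNReal.ofReal (Real.Gamma (1 - α) * Real.Gamma α) := by
  rw [← beta_shift hα0 hα1 hzt, intervalIntegral.integral_of_le hzt.le,
    ofReal_integral_eq_lintegral_ofReal]
  · exact (intervalIntegrable_iff_integrableOn_Ioc_of_le hzt.le).mp (kernel_intble hα0 hα1 hzt)
  · filter_upwards [ae_restrict_mem measurableSet_Ioc] with y hy
    have h1 : 0 ≤ y - z := by linarith [hy.1]
    have h2 : 0 ≤ t - y := by linarith [hy.2]
    positivity

lemma fubini_step {α z b : ℝ} (hα0 : 0 < α) (hα1 : α < 1) (hzb : z < b)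
    {f' : ℝ → ℝ} (hm : Measurable f') (hint : IntegrableOn f' (Ioc z b)) :
    ∫ y in Ioc z b, (∫ t in Ioc y b, f' t * (t - y) ^ (α - 1)) * (y - z) ^ (-α)
      = (Real.Gamma (1 - α) * Real.Gamma α) * ∫ t in Ioc z b, f' t := by
  set K : ℝ → ℝ → ℝ :=
    fun y t => Set.indicator (Ioi y) (fun t => f' t * (t - y) ^ (α - 1) * (y - z) ^ (-α)) t
    with hK
  -- measurability of uncurried K
  have hunc : Measurable (Function.uncurry K) := by
    have : Function.uncurry K = Set.indicator {p : ℝ × ℝ | p.1 < p.2}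
        (fun p => f' p.2 * (p.2 - p.1) ^ (α - 1) * (p.1 - z) ^ (-α)) := by
      ext p
      simp only [Function.uncurry, hK, Set.indicator_apply, mem_Ioi, Set.mem_setOf_eq]
    rw [this]
    exact Measurable.indicator (by fun_prop) (measurableSet_lt measurable_fst measurable_snd)
  -- integrability of uncurried K
  have hKint : Integrable (Function.uncurry K) ((volume.restrict (Ioc z b)).prod (volume.restrict (Ioc z b))) := by
    refine ⟨hunc.aestronglyMeasurable, ?_⟩
    rw [HasFiniteIntegral, lintegral_prod_symm _ hunc.enorm.aemeasurable]
    have bound : ∀ᵐ t ∂(volume.restrict (Ioc z b)), (∫⁻ y, (‖K y t‖₊ : ℝ≥0∞) ∂(volume.restrict (Ioc z b)))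
        ≤ ENNReal.ofReal (Real.Gamma (1 - α) * Real.Gamma α) * ENNReal.ofReal |f' t| := by
      filter_upwards [ae_restrict_mem measurableSet_Ioc] with t ht
      have step1 : (∫⁻ y, (‖K y t‖₊ : ℝ≥0∞) ∂(volume.restrict (Ioc z b)))
          ≤ ∫⁻ y, Set.indicator (Ioo z t)
            (fun y => ENNReal.ofReal (|f' t| * ((y - z) ^ (-α) * (t - y) ^ (α - 1)))) y ∂(volume.restrict (Ioc z b)) := by
        refine lintegral_mono_ae ?_
        filter_upwards [ae_restrict_mem measurableSet_Ioc] with y hy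
        by_cases hyt : y < t
        · have hmem : y ∈ Ioo z t := ⟨hy.1, hyt⟩
          rw [Set.indicator_of_mem hmem]
          have hk : K y t = f' t * (t - y) ^ (α - 1) * (y - z) ^ (-α) := by
            rw [hK]; exact Set.indicator_of_mem (mem_Ioi.mpr hyt) _
          rw [hk, ← ENNReal.ofReal_coe_nnreal, coe_nnnorm]
          apply ENNReal.ofReal_le_ofReal
          have h1 : (0:ℝ) ≤ (y - z) ^ (-α) := Real.rpow_nonneg (by linarith [hy.1]) _
          have h2 : (0:ℝ) ≤ (t - y) ^ (α - 1) := Real.rpow_nonneg (by linarith) _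
          rw [Real.norm_eq_abs, abs_mul, abs_mul, abs_of_nonneg h1, abs_of_nonneg h2]
          ring_nf
          exact le_refl _
        · have hk : K y t = 0 := by
            rw [hK]; exact Set.indicator_of_notMem (by simpa using not_lt.mp hyt) _
          simp [hk]
      refine step1.trans ?_
      rw [lintegral_indicator (measurableSet_Ioo), Measure.restrict_restrict measurableSet_Ioo]
      have hsub : Ioo z t ∩ Ioc z b = Ioo z t :=
        inter_eq_left.mpr (fun y hy => ⟨hy.1, le_trans hy.2.le ht.2⟩)
      rw [hsub]
      have : ∫⁻ y in Ioo z t, ENNReal.ofReal (|f' t| * ((y - z) ^ (-α) * (t - y) ^ (α - 1)))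
          = ENNReal.ofReal |f' t|
            * ∫⁻ y in Ioo z t, ENNReal.ofReal ((y - z) ^ (-α) * (t - y) ^ (α - 1)) := by
        rw [← lintegral_const_mul _ (by fun_prop)]
        congr 1 with y
        rw [ENNReal.ofReal_mul (abs_nonneg _)]
      rw [this]
      rw [Measure.restrict_congr_set (μ := volume) Ioo_ae_eq_Ioc, kernel_lintegral hα0 hα1 ht.1, mul_comm]
    calc ∫⁻ t, ∫⁻ y, (‖K y t‖₊ : ℝ≥0∞) ∂(volume.restrict (Ioc z b)) ∂(volume.restrict (Ioc z b))
        ≤ ∫⁻ t, ENNReal.ofReal (Real.Gamma (1 - α) * Real.Gamma α) * ENNReal.ofReal |f' t| ∂(volume.restrict (Ioc z b)) :=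
          lintegral_mono_ae bound
      _ = ENNReal.ofReal (Real.Gamma (1 - α) * Real.Gamma α)
            * ∫⁻ t, ENNReal.ofReal |f' t| ∂(volume.restrict (Ioc z b)) := lintegral_const_mul _ (by fun_prop)
      _ < ⊤ := by
          refine ENNReal.mul_lt_top ENNReal.ofReal_lt_top ?_
          have := hint.2
          rw [HasFiniteIntegral] at this
          refine lt_of_eq_of_lt ?_ this
          congr 1 with t
          rw [← ofReal_norm_eq_enorm, Real.norm_eq_abs]
  -- inner integral identities
  have A : ∀ y ∈ Ioc z b, (∫ t, K y t ∂(volume.restrict (Ioc z b)))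
      = (∫ t in Ioc y b, f' t * (t - y) ^ (α - 1)) * (y - z) ^ (-α) := by
    intro y hy
    rw [setIntegral_indicator measurableSet_Ioi]
    have : Ioc z b ∩ Ioi y = Ioc y b := by
      ext t; constructor
      · rintro ⟨⟨_, h2⟩, h3⟩; exact ⟨h3, h2⟩
      · rintro ⟨h1, h2⟩; exact ⟨⟨hy.1.trans h1, h2⟩, h1⟩
    rw [this, ← MeasureTheory.integral_mul_const]
  have B : ∀ t ∈ Ioc z b, (∫ y, K y t ∂(volume.restrict (Ioc z b))) = f' t * (Real.Gamma (1 - α) * Real.Gamma α) := by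
    intro t ht
    have hfun : (fun y => K y t) = Set.indicator (Iio t)
        (fun y => f' t * ((y - z) ^ (-α) * (t - y) ^ (α - 1))) := by
      ext y
      rw [hK]
      simp only [Set.indicator_apply, mem_Ioi, mem_Iio]
      split_ifs with h
      · ring
      · rfl
    rw [hfun, setIntegral_indicator measurableSet_Iio]
    have hsub : Ioc z b ∩ Iio t = Ioo z t := by
      ext y; constructor
      · rintro ⟨⟨h1, _⟩, h3⟩; exact ⟨h1, h3⟩
      · rintro ⟨h1, h2⟩; exact ⟨⟨h1, le_trans h2.le ht.2⟩, h2⟩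
    rw [hsub, setIntegral_congr_set Ioo_ae_eq_Ioc, MeasureTheory.integral_const_mul]
    congr 1
    rw [← intervalIntegral.integral_of_le ht.1.le]
    exact beta_shift hα0 hα1 ht.1
  calc ∫ y in Ioc z b, (∫ t in Ioc y b, f' t * (t - y) ^ (α - 1)) * (y - z) ^ (-α)
      = ∫ y, ∫ t, K y t ∂(volume.restrict (Ioc z b)) ∂(volume.restrict (Ioc z b)) := by
        exact (setIntegral_congr_fun measurableSet_Ioc fun y hy => (A y hy).symm)
    _ = ∫ t, ∫ y, K y t ∂(volume.restrict (Ioc z b)) ∂(volume.restrict (Ioc z b)) := integral_integral_swap hKint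
    _ = ∫ t in Ioc z b, f' t * (Real.Gamma (1 - α) * Real.Gamma α) := by
        exact setIntegral_congr_fun measurableSet_Ioc fun t ht => B t ht
    _ = (Real.Gamma (1 - α) * Real.Gamma α) * ∫ t in Ioc z b, f' t := by
        rw [← MeasureTheory.integral_const_mul]
        congr 1 with t
        ring

open Filter Topology Metric in
lemma ftc_ae {g : ℝ → ℝ} (hg : Integrable g volume) (b : ℝ) :
    ∀ᵐ x ∂(volume : Measure ℝ),
      HasDerivAt (fun z => ∫ t in z..b, g t) (-g x) x := by
  filter_upwards [IsUnifLocDoublingMeasure.ae_tendsto_average_norm_sub (μ := volume)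
    hg.locallyIntegrable 1] with x hx
  rw [hasDerivAt_iff_tendsto_slope]
  have havg : Tendsto (fun z : ℝ => ⨍ y in closedBall x |z - x|, ‖g y - g x‖)
      (𝓝[≠] x) (𝓝 0) := by
    refine hx (fun _ => x) (fun z => |z - x|) ?_ ?_
    · refine tendsto_nhdsWithin_of_tendsto_nhds_of_eventually_within _ ?_ ?_
      · have h0 : Tendsto (fun z : ℝ => z - x) (𝓝 x) (𝓝 (x - x)) :=
          (continuous_id.sub continuous_const).tendsto x
        rw [sub_self] at h0
        have h1 := h0.abs
        rw [abs_zero] at h1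
        exact h1.mono_left nhdsWithin_le_nhds
      · filter_upwards [self_mem_nhdsWithin] with z hz
        simpa [sub_eq_zero] using hz
    · filter_upwards with z
      exact mem_closedBall_self (by positivity)
  refine tendsto_iff_norm_sub_tendsto_zero.mpr ?_
  refine squeeze_zero_norm' ?_ (by simpa using havg.const_mul 2)
  filter_upwards [self_mem_nhdsWithin] with z hz
  have hzx : z ≠ x := hz
  have hr : (0:ℝ) < |z - x| := by
    rw [abs_pos, sub_ne_zero]; exact hzx
  -- identity for the slope
  have e0 : (∫ t in z..b, g t) - ∫ t in x..b, g t = -(∫ t in x..z, g t) := by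
    have h1 : (∫ t in z..x, g t) + ∫ t in x..b, g t = ∫ t in z..b, g t :=
      intervalIntegral.integral_add_adjacent_intervals
        hg.intervalIntegrable hg.intervalIntegrable
    have h2 : (∫ t in z..x, g t) = -(∫ t in x..z, g t) :=
      intervalIntegral.integral_symm _ _
    linarith
  have hne : z - x ≠ 0 := sub_ne_zero.mpr hzx
  have e1 : (∫ t in x..z, (g t - g x)) = (∫ t in x..z, g t) - (z - x) * g x := by
    rw [intervalIntegral.integral_sub hg.intervalIntegrable intervalIntegrable_const,
      intervalIntegral.integral_const]
    norm_num
  have slope_eq : slope (fun z => ∫ t in z..b, g t) x z - (-g x)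
      = -((z - x)⁻¹ * ∫ t in x..z, (g t - g x)) := by
    rw [slope_def_field, e0, e1]
    field_simp
    ring
  rw [slope_eq, norm_neg, norm_norm, Real.norm_eq_abs, abs_mul, abs_inv]
  -- bound the integral
  have hIoc : uIoc x z ⊆ closedBall x |z - x| := by
    intro y hy
    rw [closedBall_eq_Icc]
    rcases le_total x z with h | h
    · rw [uIoc_of_le h] at hy
      constructor
      · have := hy.1; have : x - |z - x| ≤ x := by linarith [abs_nonneg (z - x)]
        linarith [hy.1.le]
      · have : z - x ≤ |z - x| := le_abs_self _
        linarith [hy.2]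
    · rw [uIoc_of_ge h] at hy
      constructor
      · have : -(z - x) ≤ |z - x| := neg_le_abs _
        linarith [hy.1.le]
      · have : (0:ℝ) ≤ |z - x| := abs_nonneg _
        linarith [hy.2]
  have hintcb : IntegrableOn (fun y => ‖g y - g x‖) (closedBall x |z - x|) volume := by
    refine Integrable.norm ?_
    exact (hg.integrableOn).sub ((integrableOn_const_iff).mpr (Or.inr (by
      rw [Real.volume_closedBall]; exact ENNReal.ofReal_lt_top)))
  have hbound : |∫ t in x..z, (g t - g x)| ≤ ∫ y in closedBall x |z - x|, ‖g y - g x‖ := by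
    refine le_trans ?_ (setIntegral_mono_set hintcb ?_ (HasSubset.Subset.eventuallyLE hIoc))
    · have := intervalIntegral.norm_integral_le_integral_norm_uIoc
        (f := fun t => g t - g x) (a := x) (b := z) (μ := volume)
      simpa [Real.norm_eq_abs] using this
    · filter_upwards with y
      positivity
  have hcb : (∫ y in closedBall x |z - x|, ‖g y - g x‖)
      = (2 * |z - x|) * ⨍ y in closedBall x |z - x|, ‖g y - g x‖ := by
    rw [setAverage_eq, Real.volume_real_closedBall (by positivity),
      smul_eq_mul, ← mul_assoc, mul_inv_cancel₀ (by positivity), one_mul]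
  calc |(z - x)|⁻¹ * |∫ t in x..z, (g t - g x)|
      ≤ |(z - x)|⁻¹ * ((2 * |z - x|) * ⨍ y in closedBall x |z - x|, ‖g y - g x‖) := by
        rw [← hcb]
        exact mul_le_mul_of_nonneg_left hbound (by positivity)
    _ = 2 * ⨍ y in closedBall x |z - x|, ‖g y - g x‖ := by
        field_simp


end Helpers

open Filter Topology

/-- Right-sided Riemann–Liouville: `D^α_{b-} (I^α_{b-} f) = f` a.e. on `[a,b]`, `0 < α < 1`. -/
theorem rl_right_deriv_integral (a b α : ℝ) (hab : a < b) (hα0 : 0 < α) (hα1 : α < 1)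
    (f I D : ℝ → ℝ)
    (hf : IntegrableOn f (Set.Icc a b) volume)
    (hI : ∀ x, I x = (1 / Real.Gamma α) * ∫ y in x..b, f y * (y - x) ^ (α - 1))
    (hD : ∀ x, D x = -(1 / Real.Gamma (1 - α)) *
      deriv (fun z => ∫ y in z..b, I y * (y - z) ^ (-α)) x) :
    ∀ᵐ x ∂(volume.restrict (Set.Icc a b)), D x = f x := by
  have hΓα : Real.Gamma α ≠ 0 := (Real.Gamma_pos_of_pos hα0).ne'
  have hΓα' : Real.Gamma (1 - α) ≠ 0 := (Real.Gamma_pos_of_pos (by linarith)).ne'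
  have hsm := hf.aestronglyMeasurable
  set f' : ℝ → ℝ := hsm.mk f with hf'def
  have hmeas : Measurable f' := hsm.stronglyMeasurable_mk.measurable
  have hfe : f =ᵐ[volume.restrict (Set.Icc a b)] f' := hsm.ae_eq_mk
  have hae : ∀ᵐ t ∂(volume : Measure ℝ), t ∈ Set.Icc a b → f t = f' t :=
    (ae_restrict_iff' measurableSet_Icc).mp hfe
  have hint' : IntegrableOn f' (Set.Icc a b) volume := hf.congr hfe
  set g : ℝ → ℝ := (Set.Icc a b).indicator f' with hgdef
  have hg : Integrable g volume := (integrable_indicator_iff measurableSet_Icc).mpr hint'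
  -- the key identity, for z ∈ Ioo a b
  have Gval : ∀ᵐ (w : ℝ) ∂(volume : Measure ℝ), ∀ z ∈ Set.Ioo a b,
      (∫ y in z..b, I y * (y - z) ^ (-α))
        = Real.Gamma (1 - α) * ∫ t in z..b, g t := by
    filter_upwards with w
    intro z hz
    have hzb : z < b := hz.2
    have haz : a < z := hz.1
    have hIocsub : Set.Ioc z b ⊆ Set.Icc a b := fun t ht => ⟨(haz.trans ht.1).le, ht.2⟩
    -- rewrite the LHS as a set integral and apply fubini_step
    rw [intervalIntegral.integral_of_le hzb.le]
    have step : ∫ y in Set.Ioc z b, I y * (y - z) ^ (-α)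
        = (1 / Real.Gamma α) * ∫ y in Set.Ioc z b,
            (∫ t in Set.Ioc y b, f' t * (t - y) ^ (α - 1)) * (y - z) ^ (-α) := by
      rw [← MeasureTheory.integral_const_mul]
      refine setIntegral_congr_fun measurableSet_Ioc fun y hy => ?_
      rw [hI y, intervalIntegral.integral_of_le hy.2]
      have : ∫ t in Set.Ioc y b, f t * (t - y) ^ (α - 1)
          = ∫ t in Set.Ioc y b, f' t * (t - y) ^ (α - 1) := by
        refine setIntegral_congr_ae measurableSet_Ioc ?_
        filter_upwards [hae] with t h ht
        rw [h (hIocsub ⟨hy.1.trans ht.1, ht.2⟩)]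
      rw [this]
      ring
    rw [step, fubini_step hα0 hα1 hzb hmeas (hint'.mono_set hIocsub)]
    have : ∫ t in Set.Ioc z b, f' t = ∫ t in z..b, g t := by
      rw [intervalIntegral.integral_of_le hzb.le]
      refine setIntegral_congr_fun measurableSet_Ioc fun t ht => ?_
      rw [hgdef]
      exact (Set.indicator_of_mem (hIocsub ht) f').symm
    rw [this]
    field_simp
  have hIoo : ∀ᵐ x ∂(volume.restrict (Set.Icc a b)), x ∈ Set.Ioo a b := by
    rw [← Measure.restrict_congr_set Ioo_ae_eq_Icc]
    exact ae_restrict_mem measurableSet_Ioo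
  filter_upwards [ae_restrict_of_ae (ftc_ae hg b), hIoo,
    ae_restrict_of_ae (Gval), ae_restrict_of_ae hae] with x hx hxIoo hGval hfx
  have hxIcc : x ∈ Set.Icc a b := ⟨hxIoo.1.le, hxIoo.2.le⟩
  have hgx : g x = f x := by
    rw [hgdef, Set.indicator_of_mem hxIcc f', ← hfx hxIcc]
  rw [hD x]
  have heq : (fun z => ∫ y in z..b, I y * (y - z) ^ (-α))
      =ᶠ[𝓝 x] fun z => Real.Gamma (1 - α) * ∫ t in z..b, g t := by
    filter_upwards [Ioo_mem_nhds hxIoo.1 hxIoo.2] with z hz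
    exact hGval z hz
  rw [heq.deriv_eq, ((hx.const_mul (Real.Gamma (1 - α)))).deriv]
  rw [hgx]
  field_simp
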